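/- Let f : [0,T) × [0,1] → ℝⁿ be a smooth solution of ∂ₜf = V + φτ (V the normal velocity, φ a smooth scalar function) whose endpoint x = 1 is fixed in time, i.e. ∂ₜf(t,1) = 0 for all t. Then φ(t,1) = 0 and φ(t,0) = − d/dt L(f(t,·)) − ∫₀¹ ⟨κ, V⟩ ds for all t ∈ (0,T). Moreover, if V = −∇ₛ²κ − ½|κ|²κ + λκ for a constant λ and κ(t,0) = κ(t,1) = 0 for all t, then d/dt L(f(t,·)) + φ(t,0) + ∫₀¹ |∇ₛκ|² ds + λ ∫₀¹ |κ|² ds = ½ ∫₀¹ |κ|⁴ ds. -/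

import Mathlib

open Set MeasureTheory
open scoped RealInnerProductSpace

noncomputable section

/-- Arc-length derivative `∂ₛ g = |∂ₓ f|⁻¹ ∂ₓ g` along the curve `f`. -/
def sDeriv {n : ℕ} {F : Type*} [NormedAddCommGroup F] [NormedSpace ℝ F]
    (f : ℝ → EuclideanSpace ℝ (Fin n)) (g : ℝ → F) (x : ℝ) : F :=
  ‖deriv f x‖⁻¹ • deriv g x

/-- The unit tangent `τ = ∂ₛ f`. -/
def tau {n : ℕ} (f : ℝ → EuclideanSpace ℝ (Fin n)) : ℝ → EuclideanSpace ℝ (Fin n) :=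
  sDeriv f f

/-- The curvature vector `κ = ∂ₛ² f`. -/
def kappa {n : ℕ} (f : ℝ → EuclideanSpace ℝ (Fin n)) : ℝ → EuclideanSpace ℝ (Fin n) :=
  sDeriv f (tau f)

/-- Normal projection of the arc-length derivative: `∇ₛψ = ∂ₛψ − ⟨∂ₛψ, τ⟩ τ`. -/
def nablaS {n : ℕ} (f ψ : ℝ → EuclideanSpace ℝ (Fin n)) (x : ℝ) :
    EuclideanSpace ℝ (Fin n) :=
  sDeriv f ψ x - ⟪sDeriv f ψ x, tau f x⟫ • tau f x

/-- Partial time derivative of a time-dependent field. -/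
def pT {F : Type*} [NormedAddCommGroup F] [NormedSpace ℝ F]
    (g : ℝ → ℝ → F) (t x : ℝ) : F :=
  deriv (fun s => g s x) t

/-- Length of the curve `f` over `[0,1]`. -/
def curveLen {n : ℕ} (f : ℝ → EuclideanSpace ℝ (Fin n)) : ℝ :=
  ∫ x in (0 : ℝ)..1, ‖deriv f x‖

/-! ### Auxiliary lemmas -/

lemma wle1 : (1 : WithTop ℕ∞) ≤ ((⊤:ℕ∞) : WithTop ℕ∞) := by exact_mod_cast le_top
lemma wleS : ((⊤:ℕ∞) : WithTop ℕ∞) + 1 ≤ ((⊤:ℕ∞) : WithTop ℕ∞) := by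
  exact_mod_cast (by simp : (⊤:ℕ∞) + 1 ≤ ⊤)

variable {E : Type*} [NormedAddCommGroup E] [InnerProductSpace ℝ E]

lemma hasDerivAt_norm_comp {u : ℝ → E} {u' : E} {x : ℝ}
    (h : HasDerivAt u u' x) (hu : u x ≠ 0) :
    HasDerivAt (fun y => ‖u y‖) (⟪u', u x⟫ / ‖u x‖) x := by
  have hn : ‖u x‖ ≠ 0 := norm_ne_zero_iff.mpr hu
  have h1 : HasDerivAt (fun y => ⟪u y, u y⟫) (⟪u x, u'⟫ + ⟪u', u x⟫) x := h.inner ℝ h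
  have hq : (0:ℝ) < ⟪u x, u x⟫ := by
    rw [real_inner_self_eq_norm_mul_norm]; positivity
  have h2 : HasDerivAt (fun y => Real.sqrt ⟪u y, u y⟫)
      (1 / (2 * Real.sqrt ⟪u x, u x⟫) * (⟪u x, u'⟫ + ⟪u', u x⟫)) x :=
    (Real.hasDerivAt_sqrt hq.ne').comp x h1
  have hs : ∀ y, Real.sqrt ⟪u y, u y⟫ = ‖u y‖ := fun y => by
    rw [real_inner_self_eq_norm_mul_norm, Real.sqrt_mul_self (norm_nonneg _)]
  simp only [hs] at h2
  convert h2 using 1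
  rw [real_inner_comm (u x) u']
  field_simp; ring

section Uncurry

variable {f : ℝ → ℝ → E} {t x : ℝ}

lemma hasDerivAt_slice2 (hf : ContDiff ℝ (⊤:ℕ∞) (Function.uncurry f)) (t x : ℝ) :
    HasDerivAt (f t) (fderiv ℝ (Function.uncurry f) (t,x) (0,1)) x := by
  have hF : HasFDerivAt (Function.uncurry f) (fderiv ℝ (Function.uncurry f) (t,x)) (t,x) :=
    (hf.differentiable (by simp) _).hasFDerivAt
  have hc : HasDerivAt (fun y => ((t,y) : ℝ × ℝ)) ((0:ℝ),(1:ℝ)) x :=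
    (hasDerivAt_const x t).prodMk (hasDerivAt_id x)
  exact hF.comp_hasDerivAt x hc

lemma hasDerivAt_slice1 (hf : ContDiff ℝ (⊤:ℕ∞) (Function.uncurry f)) (t x : ℝ) :
    HasDerivAt (fun s => f s x) (fderiv ℝ (Function.uncurry f) (t,x) (1,0)) t := by
  have hF : HasFDerivAt (Function.uncurry f) (fderiv ℝ (Function.uncurry f) (t,x)) (t,x) :=
    (hf.differentiable (by simp) _).hasFDerivAt
  have hc : HasDerivAt (fun s => ((s,x) : ℝ × ℝ)) ((1:ℝ),(0:ℝ)) t :=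
    (hasDerivAt_id t).prodMk (hasDerivAt_const t x)
  exact hF.comp_hasDerivAt t hc

lemma deriv_slice2 (hf : ContDiff ℝ (⊤:ℕ∞) (Function.uncurry f)) (t x : ℝ) :
    deriv (f t) x = fderiv ℝ (Function.uncurry f) (t,x) (0,1) :=
  (hasDerivAt_slice2 hf t x).deriv

lemma pT_eq (hf : ContDiff ℝ (⊤:ℕ∞) (Function.uncurry f)) (t x : ℝ) :
    pT f t x = fderiv ℝ (Function.uncurry f) (t,x) (1,0) :=
  (hasDerivAt_slice1 hf t x).deriv

lemma contDiff_slice (hf : ContDiff ℝ (⊤:ℕ∞) (Function.uncurry f)) (t : ℝ) :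
    ContDiff ℝ (⊤:ℕ∞) (f t) :=
  hf.comp (contDiff_const.prodMk contDiff_id)

lemma contDiff_pd (hf : ContDiff ℝ (⊤:ℕ∞) (Function.uncurry f)) (v : ℝ × ℝ) :
    ContDiff ℝ (⊤:ℕ∞) (fun p => fderiv ℝ (Function.uncurry f) p v) :=
  (hf.fderiv_right wleS).clm_apply contDiff_const

lemma contDiff_pd2 (hf : ContDiff ℝ (⊤:ℕ∞) (Function.uncurry f)) (v w : ℝ × ℝ) :
    ContDiff ℝ (⊤:ℕ∞) (fun p => fderiv ℝ (fderiv ℝ (Function.uncurry f)) p v w) :=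
  (((hf.fderiv_right wleS).fderiv_right wleS).clm_apply contDiff_const).clm_apply contDiff_const

set_option maxHeartbeats 1000000 in
lemma hasDerivAt_mixed (hf : ContDiff ℝ (⊤:ℕ∞) (Function.uncurry f)) (t x : ℝ) :
    HasDerivAt (fun s => fderiv ℝ (Function.uncurry f) (s,x) (0,1))
      (fderiv ℝ (fderiv ℝ (Function.uncurry f)) (t,x) (1,0) (0,1)) t := by
  have hA : HasFDerivAt (fderiv ℝ (Function.uncurry f))
      (fderiv ℝ (fderiv ℝ (Function.uncurry f)) (t,x)) (t,x) :=
    (((hf.fderiv_right wleS).differentiable (by simp)) _).hasFDerivAt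
  have hc : HasDerivAt (fun s => ((s,x) : ℝ × ℝ)) ((1:ℝ),(0:ℝ)) t :=
    (hasDerivAt_id t).prodMk (hasDerivAt_const t x)
  have := (hA.comp_hasDerivAt t hc).clm_apply (hasDerivAt_const t ((0:ℝ),(1:ℝ)))
  simpa using this

lemma hasDerivAt_mixed' (hf : ContDiff ℝ (⊤:ℕ∞) (Function.uncurry f)) (t x : ℝ) :
    HasDerivAt (fun y => fderiv ℝ (Function.uncurry f) (t,y) (1,0))
      (fderiv ℝ (fderiv ℝ (Function.uncurry f)) (t,x) (0,1) (1,0)) x := by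
  have hA : HasFDerivAt (fderiv ℝ (Function.uncurry f))
      (fderiv ℝ (fderiv ℝ (Function.uncurry f)) (t,x)) (t,x) :=
    (((hf.fderiv_right wleS).differentiable (by simp)) _).hasFDerivAt
  have hc : HasDerivAt (fun y => ((t,y) : ℝ × ℝ)) ((0:ℝ),(1:ℝ)) x :=
    (hasDerivAt_const x t).prodMk (hasDerivAt_id x)
  have := (hA.comp_hasDerivAt x hc).clm_apply (hasDerivAt_const x ((1:ℝ),(0:ℝ)))
  simpa using this

lemma schwarz (hf : ContDiff ℝ (⊤:ℕ∞) (Function.uncurry f)) (t x : ℝ) :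
    fderiv ℝ (fderiv ℝ (Function.uncurry f)) (t,x) (1,0) (0,1)
      = fderiv ℝ (fderiv ℝ (Function.uncurry f)) (t,x) (0,1) (1,0) :=
  second_derivative_symmetric (f := Function.uncurry f)
    (fun y => (hf.differentiable (by simp) y).hasFDerivAt)
    ((((hf.fderiv_right wleS).differentiable (by simp)) _).hasFDerivAt) _ _

end Uncurry

section Curve

variable {n : ℕ} {c : ℝ → EuclideanSpace ℝ (Fin n)}

lemma hc_deriv (hc : ContDiff ℝ (⊤:ℕ∞) c) : ContDiff ℝ (⊤:ℕ∞) (deriv c) :=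
  (contDiff_infty_iff_deriv.mp hc).2

lemma isOpen_U (hc : ContDiff ℝ (⊤:ℕ∞) c) : IsOpen {y : ℝ | deriv c y ≠ 0} :=
  isOpen_ne_fun (hc_deriv hc).continuous continuous_const

lemma contDiffOn_rho (hc : ContDiff ℝ (⊤:ℕ∞) c) :
    ContDiffOn ℝ (⊤:ℕ∞) (fun y => ‖deriv c y‖) {y : ℝ | deriv c y ≠ 0} :=
  ((hc_deriv hc).contDiffOn).norm ℝ fun _ h => h

lemma contDiffOn_rho_inv (hc : ContDiff ℝ (⊤:ℕ∞) c) :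
    ContDiffOn ℝ (⊤:ℕ∞) (fun y => ‖deriv c y‖⁻¹) {y : ℝ | deriv c y ≠ 0} :=
  (contDiffOn_rho hc).inv fun _ h => norm_ne_zero_iff.mpr h

lemma contDiffOn_tau (hc : ContDiff ℝ (⊤:ℕ∞) c) :
    ContDiffOn ℝ (⊤:ℕ∞) (tau c) {y : ℝ | deriv c y ≠ 0} :=
  (contDiffOn_rho_inv hc).smul (hc_deriv hc).contDiffOn

lemma contDiffOn_sDeriv (hc : ContDiff ℝ (⊤:ℕ∞) c)
    {F : Type*} [NormedAddCommGroup F] [NormedSpace ℝ F] {g : ℝ → F}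
    (hg : ContDiffOn ℝ (⊤:ℕ∞) g {y : ℝ | deriv c y ≠ 0}) :
    ContDiffOn ℝ (⊤:ℕ∞) (sDeriv c g) {y : ℝ | deriv c y ≠ 0} :=
  (contDiffOn_rho_inv hc).smul (hg.deriv_of_isOpen (isOpen_U hc) wleS)

lemma contDiffOn_kappa (hc : ContDiff ℝ (⊤:ℕ∞) c) :
    ContDiffOn ℝ (⊤:ℕ∞) (kappa c) {y : ℝ | deriv c y ≠ 0} :=
  contDiffOn_sDeriv hc (contDiffOn_tau hc)

lemma contDiffOn_nablaS (hc : ContDiff ℝ (⊤:ℕ∞) c) {g : ℝ → EuclideanSpace ℝ (Fin n)}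
    (hg : ContDiffOn ℝ (⊤:ℕ∞) g {y : ℝ | deriv c y ≠ 0}) :
    ContDiffOn ℝ (⊤:ℕ∞) (nablaS c g) {y : ℝ | deriv c y ≠ 0} := by
  have h1 := contDiffOn_sDeriv hc hg
  have h2 := contDiffOn_tau hc
  exact h1.sub ((h1.inner ℝ h2).smul h2)

end Curve

section Curve2

variable {n : ℕ} {c : ℝ → EuclideanSpace ℝ (Fin n)} {x : ℝ}

lemma hasDerivAt_of_contDiffOn {F : Type*} [NormedAddCommGroup F] [NormedSpace ℝ F]
    {g : ℝ → F} {U : Set ℝ} (hg : ContDiffOn ℝ (⊤:ℕ∞) g U) (hU : IsOpen U) (hx : x ∈ U) :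
    HasDerivAt g (deriv g x) x :=
  (((hg.differentiableOn (by simp)).differentiableAt (hU.mem_nhds hx))).hasDerivAt

lemma norm_tau (hc : ContDiff ℝ (⊤:ℕ∞) c) (hx : deriv c x ≠ 0) : ‖tau c x‖ = 1 := by
  have hn : ‖deriv c x‖ ≠ 0 := norm_ne_zero_iff.mpr hx
  simp only [tau, sDeriv, norm_smul, norm_inv, norm_norm]
  field_simp

lemma inner_tau_tau (hc : ContDiff ℝ (⊤:ℕ∞) c) (hx : deriv c x ≠ 0) :
    ⟪tau c x, tau c x⟫ = 1 := by
  rw [real_inner_self_eq_norm_mul_norm, norm_tau hc hx, mul_one]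

lemma hasDerivAt_tau (hc : ContDiff ℝ (⊤:ℕ∞) c) (hx : deriv c x ≠ 0) :
    HasDerivAt (tau c) (deriv (tau c) x) x :=
  hasDerivAt_of_contDiffOn (contDiffOn_tau hc) (isOpen_U hc) hx

lemma hasDerivAt_kappa (hc : ContDiff ℝ (⊤:ℕ∞) c) (hx : deriv c x ≠ 0) :
    HasDerivAt (kappa c) (deriv (kappa c) x) x :=
  hasDerivAt_of_contDiffOn (contDiffOn_kappa hc) (isOpen_U hc) hx

lemma hasDerivAt_nablaS_kappa (hc : ContDiff ℝ (⊤:ℕ∞) c) (hx : deriv c x ≠ 0) :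
    HasDerivAt (nablaS c (kappa c)) (deriv (nablaS c (kappa c)) x) x :=
  hasDerivAt_of_contDiffOn (contDiffOn_nablaS hc (contDiffOn_kappa hc)) (isOpen_U hc) hx

lemma inner_derivTau_tau (hc : ContDiff ℝ (⊤:ℕ∞) c) (hx : deriv c x ≠ 0) :
    ⟪deriv (tau c) x, tau c x⟫ = 0 := by
  have h1 : HasDerivAt (fun y => ⟪tau c y, tau c y⟫)
      (⟪tau c x, deriv (tau c) x⟫ + ⟪deriv (tau c) x, tau c x⟫) x :=
    (hasDerivAt_tau hc hx).inner ℝ (hasDerivAt_tau hc hx)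
  have h2 : (fun y => ⟪tau c y, tau c y⟫) =ᶠ[nhds x] (fun _ => (1:ℝ)) := by
    filter_upwards [(isOpen_U hc).mem_nhds hx] with y hy
    exact inner_tau_tau hc hy
  have h3 : deriv (fun y => ⟪tau c y, tau c y⟫) x = 0 := by
    rw [Filter.EventuallyEq.deriv_eq h2, deriv_const]
  have h4 := h1.deriv
  rw [h3] at h4
  rw [real_inner_comm] at h4
  linarith
lemma inner_kappa_tau (hc : ContDiff ℝ (⊤:ℕ∞) c) (hx : deriv c x ≠ 0) :
    ⟪kappa c x, tau c x⟫ = 0 := by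
  simp only [kappa, sDeriv, real_inner_smul_left]
  rw [inner_derivTau_tau hc hx, mul_zero]

lemma inner_tau_kappa (hc : ContDiff ℝ (⊤:ℕ∞) c) (hx : deriv c x ≠ 0) :
    ⟪tau c x, kappa c x⟫ = 0 := by
  rw [real_inner_comm]; exact inner_kappa_tau hc hx

lemma inner_nablaS_tau (hc : ContDiff ℝ (⊤:ℕ∞) c) (hx : deriv c x ≠ 0)
    (g : ℝ → EuclideanSpace ℝ (Fin n)) :
    ⟪nablaS c g x, tau c x⟫ = 0 := by
  simp only [nablaS, inner_sub_left, real_inner_smul_left]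
  rw [inner_tau_tau hc hx, mul_one, sub_self]

lemma inner_tau_nablaS (hc : ContDiff ℝ (⊤:ℕ∞) c) (hx : deriv c x ≠ 0)
    (g : ℝ → EuclideanSpace ℝ (Fin n)) :
    ⟪tau c x, nablaS c g x⟫ = 0 := by
  rw [real_inner_comm]; exact inner_nablaS_tau hc hx g

/-- The integration-by-parts pointwise identity. -/
lemma hasDerivAt_ibp (hc : ContDiff ℝ (⊤:ℕ∞) c) (hx : deriv c x ≠ 0) :
    HasDerivAt (fun y => ⟪kappa c y, nablaS c (kappa c) y⟫)
      ((⟪kappa c x, nablaS c (nablaS c (kappa c)) x⟫ + ‖nablaS c (kappa c) x‖^2)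
        * ‖deriv c x‖) x := by
  have hρ : ‖deriv c x‖ ≠ 0 := norm_ne_zero_iff.mpr hx
  have h := (hasDerivAt_kappa hc hx).inner ℝ (hasDerivAt_nablaS_kappa hc hx)
  refine h.congr_deriv ?_
  have e1 : ⟪kappa c x, deriv (nablaS c (kappa c)) x⟫
      = ⟪kappa c x, nablaS c (nablaS c (kappa c)) x⟫ * ‖deriv c x‖ := by
    simp only [nablaS, sDeriv]
    rw [inner_sub_right, real_inner_smul_right, real_inner_smul_right,
      inner_kappa_tau hc hx]
    field_simp
    simp
  have e2 : ⟪deriv (kappa c) x, nablaS c (kappa c) x⟫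
      = ‖nablaS c (kappa c) x‖^2 * ‖deriv c x‖ := by
    have hd : deriv (kappa c) x = ‖deriv c x‖ • sDeriv c (kappa c) x := by
      simp only [sDeriv, smul_smul]
      rw [mul_inv_cancel₀ hρ, one_smul]
    rw [hd, real_inner_smul_left]
    have : sDeriv c (kappa c) x
        = nablaS c (kappa c) x + ⟪sDeriv c (kappa c) x, tau c x⟫ • tau c x := by
      simp [nablaS]
    rw [this, inner_add_left, real_inner_smul_left,
      inner_tau_nablaS hc hx (kappa c), mul_zero, add_zero,
      real_inner_self_eq_norm_sq]
    ring
  rw [e1, e2]; ring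

end Curve2

section Part1

variable {n : ℕ} {T : ℝ} {f V : ℝ → ℝ → EuclideanSpace ℝ (Fin n)} {φ : ℝ → ℝ → ℝ}

lemma phi_one_eq_zero (hf : ContDiff ℝ (⊤:ℕ∞) (Function.uncurry f))
    {t : ℝ}
    (hreg1 : deriv (f t) 1 ≠ 0)
    (hnormal1 : ⟪V t 1, tau (f t) 1⟫ = 0)
    (hflow1 : pT f t 1 = V t 1 + φ t 1 • tau (f t) 1)
    (hfix1 : pT f t 1 = 0) :
    φ t 1 = 0 := by
  have h0 : (0 : EuclideanSpace ℝ (Fin n)) = V t 1 + φ t 1 • tau (f t) 1 := by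
    rw [← hfix1]; exact hflow1
  have := congrArg (fun w => ⟪w, tau (f t) 1⟫) h0
  simp only [inner_add_left, real_inner_smul_left, inner_zero_left] at this
  rw [hnormal1, inner_tau_tau (contDiff_slice hf t) hreg1] at this
  simpa using this.symm

end Part1

section Part1b

variable {n : ℕ} {T : ℝ} {f V : ℝ → ℝ → EuclideanSpace ℝ (Fin n)} {φ : ℝ → ℝ → ℝ}

lemma length_hasDerivAt (hf : ContDiff ℝ (⊤:ℕ∞) (Function.uncurry f))
    (hreg : ∀ t ∈ Ico (0:ℝ) T, ∀ x ∈ Icc (0:ℝ) 1, deriv (f t) x ≠ 0)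
    {t : ℝ} (ht : t ∈ Ioo (0:ℝ) T) :
    HasDerivAt (fun s => curveLen (f s))
      (∫ x in (0:ℝ)..1,
        ⟪fderiv ℝ (fderiv ℝ (Function.uncurry f)) (t,x) (1,0) (0,1),
          fderiv ℝ (Function.uncurry f) (t,x) (0,1)⟫
          / ‖fderiv ℝ (Function.uncurry f) (t,x) (0,1)‖) t := by
  set Fu := Function.uncurry f with hFu
  set W : Set (ℝ × ℝ) := {p | fderiv ℝ Fu p (0,1) ≠ 0} with hW
  have hWopen : IsOpen W :=
    isOpen_ne_fun (contDiff_pd hf ((0:ℝ),(1:ℝ))).continuous continuous_const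
  have hsub : ({t} ×ˢ Icc (0:ℝ) 1 : Set (ℝ × ℝ)) ⊆ W := by
    rintro ⟨s, x⟩ ⟨hs, hx⟩
    simp only [mem_singleton_iff] at hs
    subst hs
    have := hreg _ ⟨ht.1.le, ht.2⟩ x hx
    rwa [deriv_slice2 hf] at this
  obtain ⟨u, v, huo, hvo, htu, hIv, huv⟩ :=
    generalized_tube_lemma isCompact_singleton isCompact_Icc hWopen hsub
  obtain ⟨ε, hε, hball⟩ := Metric.isOpen_iff.mp huo t (htu rfl)
  set ε2 := ε / 2 with hε2
  have hε2pos : 0 < ε2 := by positivity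
  have hKW : Metric.closedBall t ε2 ×ˢ Icc (0:ℝ) 1 ⊆ W := by
    rintro ⟨s, x⟩ ⟨hs, hx⟩
    rw [Metric.mem_closedBall] at hs
    exact huv ⟨hball (Metric.mem_ball.mpr (by simp only [hε2] at hs; linarith)), hIv hx⟩
  set F' : ℝ × ℝ → ℝ := fun p =>
    ⟪fderiv ℝ (fderiv ℝ Fu) p (1,0) (0,1), fderiv ℝ Fu p (0,1)⟫
      / ‖fderiv ℝ Fu p (0,1)‖ with hF'
  have contB : Continuous fun p => fderiv ℝ (fderiv ℝ Fu) p ((1:ℝ),(0:ℝ)) ((0:ℝ),(1:ℝ)) :=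
    (contDiff_pd2 hf _ _).continuous
  have contg2 : Continuous fun p => fderiv ℝ Fu p ((0:ℝ),(1:ℝ)) :=
    (contDiff_pd hf _).continuous
  have contF' : ContinuousOn F' W := by
    apply ContinuousOn.div ((contB.inner contg2).continuousOn)
      (contg2.norm.continuousOn)
    exact fun p hp => norm_ne_zero_iff.mpr hp
  have hKcomp : IsCompact (Metric.closedBall t ε2 ×ˢ Icc (0:ℝ) 1) :=
    (isCompact_closedBall _ _).prod isCompact_Icc
  obtain ⟨C, hC⟩ := hKcomp.exists_bound_of_continuousOn (contF'.mono hKW)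
  have hmain := intervalIntegral.hasDerivAt_integral_of_dominated_loc_of_deriv_le
    (F := fun s x => ‖deriv (f s) x‖) (F' := fun s x => F' (s, x))
    (x₀ := t) (a := (0:ℝ)) (b := 1) (μ := volume) (bound := fun _ => C) (Metric.ball_mem_nhds t hε2pos)
    ?_ ?_ ?_ ?_ ?_ ?_
  · exact hmain.2
  · refine Filter.Eventually.of_forall fun s => ?_
    exact ((hc_deriv (contDiff_slice hf s)).continuous.norm).aestronglyMeasurable
  · exact ((hc_deriv (contDiff_slice hf t)).continuous.norm).continuousOn.intervalIntegrable
  · have : ContinuousOn (fun x => F' (t, x)) (Ioc (0:ℝ) 1) := by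
      apply (contF'.mono hKW).comp (Continuous.continuousOn (by fun_prop))
      intro x hx
      exact ⟨Metric.mem_closedBall_self hε2pos.le, Ioc_subset_Icc_self hx⟩
    rw [Set.uIoc_of_le (by norm_num : (0:ℝ) ≤ 1)]
    exact this.aestronglyMeasurable measurableSet_Ioc
  · refine Filter.Eventually.of_forall fun x hx s hs => ?_
    have : (s, x) ∈ Metric.closedBall t ε2 ×ˢ Icc (0:ℝ) 1 := by
      rw [Set.uIoc_of_le (by norm_num : (0:ℝ) ≤ 1)] at hx
      exact ⟨Metric.ball_subset_closedBall hs, Ioc_subset_Icc_self hx⟩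
    exact hC _ this
  · exact intervalIntegrable_const
  · refine Filter.Eventually.of_forall fun x hx s hs => ?_
    have hmem : (s, x) ∈ Metric.closedBall t ε2 ×ˢ Icc (0:ℝ) 1 := by
      rw [Set.uIoc_of_le (by norm_num : (0:ℝ) ≤ 1)] at hx
      exact ⟨Metric.ball_subset_closedBall hs, Ioc_subset_Icc_self hx⟩
    have hne : fderiv ℝ Fu (s, x) ((0:ℝ),(1:ℝ)) ≠ 0 := hKW hmem
    have heq : (fun s' => ‖deriv (f s') x‖)
        = fun s' => ‖fderiv ℝ Fu (s', x) ((0:ℝ),(1:ℝ))‖ :=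
      funext fun s' => by rw [deriv_slice2 hf]
    rw [heq]
    exact hasDerivAt_norm_comp (hasDerivAt_mixed hf s x) hne

end Part1b

section Part1c

variable {n : ℕ} {T : ℝ} {f V : ℝ → ℝ → EuclideanSpace ℝ (Fin n)} {φ : ℝ → ℝ → ℝ}

lemma integrand_eq (hf : ContDiff ℝ (⊤:ℕ∞) (Function.uncurry f))
    (hV : ContDiff ℝ (⊤:ℕ∞) (Function.uncurry V))
    (hφ : ContDiff ℝ (⊤:ℕ∞) (Function.uncurry φ))
    (hreg : ∀ t ∈ Ico (0:ℝ) T, ∀ x ∈ Icc (0:ℝ) 1, deriv (f t) x ≠ 0)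
    (hnormal : ∀ t ∈ Ico (0:ℝ) T, ∀ x ∈ Icc (0:ℝ) 1, ⟪V t x, tau (f t) x⟫ = 0)
    (hflow : ∀ t ∈ Ico (0:ℝ) T, ∀ x ∈ Icc (0:ℝ) 1,
      pT f t x = V t x + φ t x • tau (f t) x)
    {t : ℝ} (ht : t ∈ Ioo (0:ℝ) T) {x : ℝ} (hx : x ∈ Ioo (0:ℝ) 1) :
    ⟪fderiv ℝ (fderiv ℝ (Function.uncurry f)) (t,x) (1,0) (0,1),
        fderiv ℝ (Function.uncurry f) (t,x) (0,1)⟫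
      / ‖fderiv ℝ (Function.uncurry f) (t,x) (0,1)‖
    = deriv (φ t) x - ⟪kappa (f t) x, V t x⟫ * ‖deriv (f t) x‖ := by
  have htI : t ∈ Ico (0:ℝ) T := ⟨ht.1.le, ht.2⟩
  set c := f t with hc_def
  have hc : ContDiff ℝ (⊤:ℕ∞) c := contDiff_slice hf t
  have hxI : x ∈ Icc (0:ℝ) 1 := Ioo_subset_Icc_self hx
  have hxU : deriv c x ≠ 0 := hreg t htI x hxI
  have hρ : ‖deriv c x‖ ≠ 0 := norm_ne_zero_iff.mpr hxU
  -- Schwarz + mixed derivative: the numerator's first argument is ∂ₓ (pT f t ·)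
  have hm : fderiv ℝ (fderiv ℝ (Function.uncurry f)) (t,x) (1,0) (0,1)
      = deriv (fun y => pT f t y) x := by
    rw [schwarz hf t x]
    have h' := (hasDerivAt_mixed' hf t x).deriv
    rw [← h']
    congr 1
    exact funext fun y => (pT_eq hf t y).symm
  -- derivative of the flow right-hand side
  have hVd : HasDerivAt (V t) (deriv (V t) x) x :=
    (((contDiff_slice hV t).differentiable (by simp)) x).hasDerivAt
  have hφd : HasDerivAt (φ t) (deriv (φ t) x) x :=
    (((contDiff_slice hφ t).differentiable (by simp)) x).hasDerivAt
  have hτd : HasDerivAt (tau c) (deriv (tau c) x) x := hasDerivAt_tau hc hxU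
  have hRd : HasDerivAt (fun y => V t y + φ t y • tau c y)
      (deriv (V t) x + (φ t x • deriv (tau c) x + deriv (φ t) x • tau c x)) x :=
    hVd.add (hφd.smul hτd)
  have heq : (fun y => pT f t y) =ᶠ[nhds x] fun y => V t y + φ t y • tau c y := by
    filter_upwards [isOpen_Ioo.mem_nhds hx] with y hy
    exact hflow t htI y (Ioo_subset_Icc_self hy)
  have hDeq : deriv (fun y => pT f t y) x
      = deriv (V t) x + (φ t x • deriv (tau c) x + deriv (φ t) x • tau c x) := by
    rw [Filter.EventuallyEq.deriv_eq heq, hRd.deriv]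
  -- ⟪deriv (V t) x, tau c x⟫ = -⟪V t x, deriv (tau c) x⟫
  have hq : HasDerivAt (fun y => ⟪V t y, tau c y⟫)
      (⟪V t x, deriv (tau c) x⟫ + ⟪deriv (V t) x, tau c x⟫) x := hVd.inner ℝ hτd
  have hq0 : (fun y => ⟪V t y, tau c y⟫) =ᶠ[nhds x] fun _ => (0:ℝ) := by
    filter_upwards [isOpen_Ioo.mem_nhds hx] with y hy
    exact hnormal t htI y (Ioo_subset_Icc_self hy)
  have hVτ : ⟪deriv (V t) x, tau c x⟫ = -⟪V t x, deriv (tau c) x⟫ := by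
    have h1 := hq.deriv
    rw [Filter.EventuallyEq.deriv_eq hq0, deriv_const] at h1
    linarith
  -- deriv (tau c) x = ‖deriv c x‖ • kappa c x
  have hτκ : deriv (tau c) x = ‖deriv c x‖ • kappa c x := by
    simp only [kappa, sDeriv, smul_smul]
    rw [mul_inv_cancel₀ hρ, one_smul]
  -- deriv c x = ‖deriv c x‖ • tau c x
  have hcτ : deriv c x = ‖deriv c x‖ • tau c x := by
    simp only [tau, sDeriv, smul_smul]
    rw [mul_inv_cancel₀ hρ, one_smul]
  have hfx : fderiv ℝ (Function.uncurry f) (t,x) ((0:ℝ),(1:ℝ)) = deriv c x :=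
    (deriv_slice2 hf t x).symm
  rw [hm, hfx, hDeq, hcτ]
  rw [inner_add_left, inner_add_left, real_inner_smul_left, real_inner_smul_left,
    real_inner_smul_right, real_inner_smul_right, real_inner_smul_right]
  rw [hVτ, hτκ, real_inner_smul_right, inner_tau_tau hc hxU,
    real_inner_smul_left, inner_kappa_tau hc hxU,
    real_inner_comm (V t x) (kappa c x)]
  rw [norm_smul, norm_norm, norm_tau hc hxU]
  field_simp
  ring

end Part1c

section Part1d

variable {n : ℕ} {T : ℝ} {f V : ℝ → ℝ → EuclideanSpace ℝ (Fin n)} {φ : ℝ → ℝ → ℝ}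

lemma contOn_KV (hf : ContDiff ℝ (⊤:ℕ∞) (Function.uncurry f))
    (hV : ContDiff ℝ (⊤:ℕ∞) (Function.uncurry V)) {t : ℝ}
    (hU : ∀ x ∈ Icc (0:ℝ) 1, deriv (f t) x ≠ 0) :
    ContinuousOn (fun x => ⟪kappa (f t) x, V t x⟫ * ‖deriv (f t) x‖) (Icc (0:ℝ) 1) := by
  have hκ : ContinuousOn (kappa (f t)) (Icc (0:ℝ) 1) :=
    ((contDiffOn_kappa (contDiff_slice hf t)).continuousOn).mono hU
  have hVc : ContinuousOn (V t) (Icc (0:ℝ) 1) :=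
    ((contDiff_slice hV t).continuous).continuousOn
  exact (hκ.inner hVc).mul
    ((hc_deriv (contDiff_slice hf t)).continuous.norm).continuousOn

lemma part1_main (hf : ContDiff ℝ (⊤:ℕ∞) (Function.uncurry f))
    (hV : ContDiff ℝ (⊤:ℕ∞) (Function.uncurry V))
    (hφ : ContDiff ℝ (⊤:ℕ∞) (Function.uncurry φ))
    (hreg : ∀ t ∈ Ico (0:ℝ) T, ∀ x ∈ Icc (0:ℝ) 1, deriv (f t) x ≠ 0)
    (hnormal : ∀ t ∈ Ico (0:ℝ) T, ∀ x ∈ Icc (0:ℝ) 1, ⟪V t x, tau (f t) x⟫ = 0)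
    (hflow : ∀ t ∈ Ico (0:ℝ) T, ∀ x ∈ Icc (0:ℝ) 1,
      pT f t x = V t x + φ t x • tau (f t) x)
    {t : ℝ} (ht : t ∈ Ioo (0:ℝ) T) :
    deriv (fun s => curveLen (f s)) t
      = (φ t 1 - φ t 0) - ∫ x in (0:ℝ)..1, ⟪kappa (f t) x, V t x⟫ * ‖deriv (f t) x‖ := by
  have hd := (length_hasDerivAt hf hreg ht).deriv
  rw [hd]
  have hae : ∀ᵐ x : ℝ, x ∈ Set.uIoc (0:ℝ) 1 →
      ⟪fderiv ℝ (fderiv ℝ (Function.uncurry f)) (t,x) (1,0) (0,1),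
          fderiv ℝ (Function.uncurry f) (t,x) (0,1)⟫
        / ‖fderiv ℝ (Function.uncurry f) (t,x) (0,1)‖
      = deriv (φ t) x - ⟪kappa (f t) x, V t x⟫ * ‖deriv (f t) x‖ := by
    have h0 : volume ({(1:ℝ)} : Set ℝ) = 0 := Real.volume_singleton
    have h1 : ∀ᵐ x : ℝ, x ∉ ({(1:ℝ)} : Set ℝ) := measure_eq_zero_iff_ae_notMem.mp h0
    filter_upwards [h1] with x hx1 hxI
    rw [Set.uIoc_of_le (by norm_num : (0:ℝ) ≤ 1)] at hxI
    have hx1' : x ≠ 1 := by simpa using hx1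
    exact integrand_eq hf hV hφ hreg hnormal hflow ht ⟨hxI.1, lt_of_le_of_ne hxI.2 hx1'⟩
  rw [intervalIntegral.integral_congr_ae hae]
  have hφc : Continuous (deriv (φ t)) :=
    (contDiff_infty_iff_deriv.mp (contDiff_slice hφ t)).2.continuous
  have hint1 : IntervalIntegrable (deriv (φ t)) volume 0 1 :=
    hφc.continuousOn.intervalIntegrable
  have hint2 : IntervalIntegrable
      (fun x => ⟪kappa (f t) x, V t x⟫ * ‖deriv (f t) x‖) volume 0 1 := by
    apply ContinuousOn.intervalIntegrable
    rw [Set.uIcc_of_le (by norm_num : (0:ℝ) ≤ 1)]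
    exact contOn_KV hf hV (hreg t ⟨ht.1.le, ht.2⟩)
  rw [intervalIntegral.integral_sub hint1 hint2]
  congr 1
  exact intervalIntegral.integral_deriv_eq_sub
    (fun x _ => ((contDiff_slice hφ t).differentiable (by simp)).differentiableAt)
    hint1

end Part1d

section Part2

variable {n : ℕ} {c : ℝ → EuclideanSpace ℝ (Fin n)}

lemma contOn_a (hc : ContDiff ℝ (⊤:ℕ∞) c) (hU : ∀ x ∈ Icc (0:ℝ) 1, deriv c x ≠ 0) :
    ContinuousOn (fun x => ⟪kappa c x, nablaS c (nablaS c (kappa c)) x⟫ * ‖deriv c x‖)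
      (Icc (0:ℝ) 1) := by
  have h1 := (contDiffOn_kappa hc).continuousOn.mono hU
  have h2 := (contDiffOn_nablaS hc (contDiffOn_nablaS hc (contDiffOn_kappa hc))).continuousOn.mono hU
  exact (h1.inner h2).mul ((hc_deriv hc).continuous.norm).continuousOn

lemma contOn_b (hc : ContDiff ℝ (⊤:ℕ∞) c) (hU : ∀ x ∈ Icc (0:ℝ) 1, deriv c x ≠ 0) :
    ContinuousOn (fun x => ‖nablaS c (kappa c) x‖ ^ 2 * ‖deriv c x‖) (Icc (0:ℝ) 1) := by
  have h2 := (contDiffOn_nablaS hc (contDiffOn_kappa hc)).continuousOn.mono hU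
  exact ((h2.norm.pow 2)).mul ((hc_deriv hc).continuous.norm).continuousOn

lemma contOn_e (hc : ContDiff ℝ (⊤:ℕ∞) c) (hU : ∀ x ∈ Icc (0:ℝ) 1, deriv c x ≠ 0) :
    ContinuousOn (fun x => ‖kappa c x‖ ^ 2 * ‖deriv c x‖) (Icc (0:ℝ) 1) := by
  have h1 := (contDiffOn_kappa hc).continuousOn.mono hU
  exact ((h1.norm.pow 2)).mul ((hc_deriv hc).continuous.norm).continuousOn

lemma contOn_d (hc : ContDiff ℝ (⊤:ℕ∞) c) (hU : ∀ x ∈ Icc (0:ℝ) 1, deriv c x ≠ 0) :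
    ContinuousOn (fun x => ‖kappa c x‖ ^ 4 * ‖deriv c x‖) (Icc (0:ℝ) 1) := by
  have h1 := (contDiffOn_kappa hc).continuousOn.mono hU
  exact ((h1.norm.pow 4)).mul ((hc_deriv hc).continuous.norm).continuousOn

lemma uI : Set.uIoc (0:ℝ) 1 = Ioc (0:ℝ) 1 := Set.uIoc_of_le (by norm_num)
lemma uI' : Set.uIcc (0:ℝ) 1 = Icc (0:ℝ) 1 := Set.uIcc_of_le (by norm_num)

lemma intervalIntegrable_of_contOnIcc {g : ℝ → ℝ}
    (h : ContinuousOn g (Icc (0:ℝ) 1)) : IntervalIntegrable g volume 0 1 := by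
  apply ContinuousOn.intervalIntegrable
  rwa [uI']

lemma ibp_integral (hc : ContDiff ℝ (⊤:ℕ∞) c) (hU : ∀ x ∈ Icc (0:ℝ) 1, deriv c x ≠ 0)
    (hκ0 : kappa c 0 = 0) (hκ1 : kappa c 1 = 0) :
    (∫ x in (0:ℝ)..1, ⟪kappa c x, nablaS c (nablaS c (kappa c)) x⟫ * ‖deriv c x‖)
      = - ∫ x in (0:ℝ)..1, ‖nablaS c (kappa c) x‖ ^ 2 * ‖deriv c x‖ := by
  have ha := intervalIntegrable_of_contOnIcc (contOn_a hc hU)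
  have hb := intervalIntegrable_of_contOnIcc (contOn_b hc hU)
  have hsum : (∫ x in (0:ℝ)..1,
      (⟪kappa c x, nablaS c (nablaS c (kappa c)) x⟫ + ‖nablaS c (kappa c) x‖^2)
        * ‖deriv c x‖) = 0 := by
    rw [intervalIntegral.integral_eq_sub_of_hasDerivAt
      (f := fun y => ⟪kappa c y, nablaS c (kappa c) y⟫)
      (fun x hx => by
        rw [uI'] at hx
        exact hasDerivAt_ibp hc (hU x hx))
      (by
        apply intervalIntegrable_of_contOnIcc
        exact ((contOn_a hc hU).add (contOn_b hc hU)).congr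
          (fun x hx => by simp only [Pi.add_apply]; ring))]
    rw [hκ0, hκ1]
    simp
  have hsplit : (∫ x in (0:ℝ)..1,
      (⟪kappa c x, nablaS c (nablaS c (kappa c)) x⟫ + ‖nablaS c (kappa c) x‖^2)
        * ‖deriv c x‖)
      = (∫ x in (0:ℝ)..1, ⟪kappa c x, nablaS c (nablaS c (kappa c)) x⟫ * ‖deriv c x‖)
        + ∫ x in (0:ℝ)..1, ‖nablaS c (kappa c) x‖ ^ 2 * ‖deriv c x‖ := by
    rw [← intervalIntegral.integral_add ha hb]
    apply intervalIntegral.integral_congr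
    intro x hx
    ring
  rw [hsplit] at hsum
  linarith

end Part2


/-- The tangential component at the moving end-point:  if `∂ₜ f = V + φτ` and the end-point
`x = 1` is fixed, then `φ(t,1) = 0` and `φ(t,0) = −d/dt L(f) − ∫⟨κ, V⟩ ds`; moreover, for the
elastic flow with `κ = 0` at both end-points,
`d/dt L(f) + φ(t,0) + ∫|∇ₛκ|² ds + λ∫|κ|² ds = ½∫|κ|⁴ ds`. -/
theorem tangential_component_at_junction {n : ℕ} (hn : 2 ≤ n) (T : ℝ) (hT : 0 < T)
    (f V : ℝ → ℝ → EuclideanSpace ℝ (Fin n)) (φ : ℝ → ℝ → ℝ) (lam : ℝ)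
    (hf : ContDiff ℝ (⊤ : ℕ∞) (Function.uncurry f))
    (hV : ContDiff ℝ (⊤ : ℕ∞) (Function.uncurry V))
    (hφ : ContDiff ℝ (⊤ : ℕ∞) (Function.uncurry φ))
    (hreg : ∀ t ∈ Ico (0 : ℝ) T, ∀ x ∈ Icc (0 : ℝ) 1, deriv (f t) x ≠ 0)
    (hnormal : ∀ t ∈ Ico (0 : ℝ) T, ∀ x ∈ Icc (0 : ℝ) 1, ⟪V t x, tau (f t) x⟫ = 0)
    (hflow : ∀ t ∈ Ico (0 : ℝ) T, ∀ x ∈ Icc (0 : ℝ) 1,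
      pT f t x = V t x + φ t x • tau (f t) x)
    (hfix : ∀ t ∈ Ico (0 : ℝ) T, pT f t 1 = 0) :
    (∀ t ∈ Ioo (0 : ℝ) T,
      φ t 1 = 0 ∧
      φ t 0 = -deriv (fun s => curveLen (f s)) t
          - ∫ x in (0 : ℝ)..1, ⟪kappa (f t) x, V t x⟫ * ‖deriv (f t) x‖)
    ∧ ((∀ t ∈ Ico (0 : ℝ) T, ∀ x ∈ Icc (0 : ℝ) 1,
          V t x = -nablaS (f t) (nablaS (f t) (kappa (f t))) x
              - ((1 / 2 : ℝ) * ‖kappa (f t) x‖ ^ 2) • kappa (f t) x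
              + lam • kappa (f t) x) →
        (∀ t ∈ Ico (0 : ℝ) T, kappa (f t) 0 = 0 ∧ kappa (f t) 1 = 0) →
        ∀ t ∈ Ioo (0 : ℝ) T,
          deriv (fun s => curveLen (f s)) t + φ t 0
              + (∫ x in (0 : ℝ)..1, ‖nablaS (f t) (kappa (f t)) x‖ ^ 2 * ‖deriv (f t) x‖)
              + lam * ∫ x in (0 : ℝ)..1, ‖kappa (f t) x‖ ^ 2 * ‖deriv (f t) x‖
            = (1 / 2 : ℝ) * ∫ x in (0 : ℝ)..1, ‖kappa (f t) x‖ ^ 4 * ‖deriv (f t) x‖) := by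
  have h1mem : (1:ℝ) ∈ Icc (0:ℝ) 1 := ⟨by norm_num, le_refl 1⟩
  have key : ∀ t ∈ Ioo (0:ℝ) T, φ t 1 = 0 ∧
      deriv (fun s => curveLen (f s)) t
        = - φ t 0 - ∫ x in (0:ℝ)..1, ⟪kappa (f t) x, V t x⟫ * ‖deriv (f t) x‖ := by
    intro t ht
    have htI : t ∈ Ico (0:ℝ) T := ⟨ht.1.le, ht.2⟩
    have hφ1 : φ t 1 = 0 :=
      phi_one_eq_zero hf (hreg t htI 1 h1mem) (hnormal t htI 1 h1mem)
        (hflow t htI 1 h1mem) (hfix t htI)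
    have h := part1_main hf hV hφ hreg hnormal hflow ht
    rw [hφ1] at h
    exact ⟨hφ1, by rw [h]; ring⟩
  constructor
  · intro t ht
    obtain ⟨hφ1, h⟩ := key t ht
    exact ⟨hφ1, by rw [h]; ring⟩
  · intro hVform hκends t ht
    have htI : t ∈ Ico (0:ℝ) T := ⟨ht.1.le, ht.2⟩
    obtain ⟨hφ1, h⟩ := key t ht
    have hc : ContDiff ℝ (⊤:ℕ∞) (f t) := contDiff_slice hf t
    have hU : ∀ x ∈ Icc (0:ℝ) 1, deriv (f t) x ≠ 0 := hreg t htI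
    have ha := intervalIntegrable_of_contOnIcc (contOn_a hc hU)
    have hb := intervalIntegrable_of_contOnIcc (contOn_b hc hU)
    have hd := intervalIntegrable_of_contOnIcc (contOn_d hc hU)
    have he := intervalIntegrable_of_contOnIcc (contOn_e hc hU)
    have hIeq : (∫ x in (0:ℝ)..1, ⟪kappa (f t) x, V t x⟫ * ‖deriv (f t) x‖)
        = -(∫ x in (0:ℝ)..1,
              ⟪kappa (f t) x, nablaS (f t) (nablaS (f t) (kappa (f t))) x⟫ * ‖deriv (f t) x‖)
          - (1/2) * (∫ x in (0:ℝ)..1, ‖kappa (f t) x‖ ^ 4 * ‖deriv (f t) x‖)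
          + lam * ∫ x in (0:ℝ)..1, ‖kappa (f t) x‖ ^ 2 * ‖deriv (f t) x‖ := by
      have hcongr : (∫ x in (0:ℝ)..1, ⟪kappa (f t) x, V t x⟫ * ‖deriv (f t) x‖)
          = ∫ x in (0:ℝ)..1,
              (-(⟪kappa (f t) x, nablaS (f t) (nablaS (f t) (kappa (f t))) x⟫ * ‖deriv (f t) x‖)
                - (1/2) * (‖kappa (f t) x‖ ^ 4 * ‖deriv (f t) x‖)
                + lam * (‖kappa (f t) x‖ ^ 2 * ‖deriv (f t) x‖)) := by
        apply intervalIntegral.integral_congr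
        intro x hx
        rw [uI'] at hx
        dsimp only
        rw [hVform t htI x hx]
        rw [inner_add_right, inner_sub_right, inner_neg_right, real_inner_smul_right,
          real_inner_smul_right, real_inner_self_eq_norm_sq]
        ring
      have ha' : IntervalIntegrable (fun x =>
          -(⟪kappa (f t) x, nablaS (f t) (nablaS (f t) (kappa (f t))) x⟫ * ‖deriv (f t) x‖))
          volume 0 1 := ha.neg
      have hd' : IntervalIntegrable (fun x =>
          (1/2 : ℝ) * (‖kappa (f t) x‖ ^ 4 * ‖deriv (f t) x‖)) volume 0 1 := hd.const_mul _
      have he' : IntervalIntegrable (fun x =>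
          lam * (‖kappa (f t) x‖ ^ 2 * ‖deriv (f t) x‖)) volume 0 1 := he.const_mul _
      have hsd : IntervalIntegrable (fun x =>
          -(⟪kappa (f t) x, nablaS (f t) (nablaS (f t) (kappa (f t))) x⟫ * ‖deriv (f t) x‖)
            - (1/2 : ℝ) * (‖kappa (f t) x‖ ^ 4 * ‖deriv (f t) x‖)) volume 0 1 := ha'.sub hd'
      rw [hcongr, ← intervalIntegral.integral_neg,
        ← intervalIntegral.integral_const_mul, ← intervalIntegral.integral_const_mul,
        ← intervalIntegral.integral_sub ha' hd',
        ← intervalIntegral.integral_add hsd he']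
    have hab := ibp_integral hc hU (hκends t htI).1 (hκends t htI).2
    rw [h, hIeq, hab]
    ring
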